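/- Let λ > 0 and let X be a random variable whose law is the exponential distribution with rate λ. Then the family of binary-digit random variables (b_l(X))_{l ∈ ℤ}, where b_l(x) = ⌊x/2^l⌋ mod 2, is mutually independent. -/

import Mathlib

open MeasureTheory ProbabilityTheory Real Set
open scoped ENNReal

namespace BinDigExp

/-- The `l`-th binary digit. -/
noncomputable def D (l : ℤ) (x : ℝ) : ℤ := ⌊x / (2:ℝ) ^ l⌋ % 2

lemma measurable_D (l : ℤ) : Measurable (D l) := by
  have h : Measurable fun x : ℝ => x / (2:ℝ)^l := measurable_id.div_const _
  have h2 : Measurable fun n : ℤ => n % 2 := measurable_from_top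
  exact h2.comp (Int.measurable_floor.comp h)

/-- The digit event. -/
def E (S : Finset ℤ) (V : ℤ → Set ℤ) : Set ℝ := {x | ∀ l ∈ S, D l x ∈ V l}

lemma E_eq (S : Finset ℤ) (V : ℤ → Set ℤ) : E S V = ⋂ l ∈ S, D l ⁻¹' V l := by
  ext x; simp [E]

lemma measurableSet_E (S : Finset ℤ) (V : ℤ → Set ℤ) : MeasurableSet (E S V) := by
  rw [E_eq]
  exact S.measurableSet_biInter fun l _ =>
    (measurable_D l) ((Set.to_countable (V l)).measurableSet)

lemma expMeasure_def (lam : ℝ) : expMeasure lam = volume.withDensity (exponentialPDF lam) := rfl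

/-- Translation of a subset of `[0,∞)` scales exponential measure by `exp (-(lam*c))`. -/
lemma expMeasure_shift (lam : ℝ) {A : Set ℝ} (hA : MeasurableSet A) (hA0 : A ⊆ Ici 0)
    {c : ℝ} (hc : 0 ≤ c) :
    expMeasure lam ((fun x => x - c) ⁻¹' A)
      = ENNReal.ofReal (Real.exp (-(lam * c))) * expMeasure lam A := by
  have hpre : MeasurableSet ((fun x => x - c) ⁻¹' A) := hA.preimage (measurable_id.sub_const c)
  rw [expMeasure_def, withDensity_apply _ hpre, withDensity_apply _ hA,
    ← lintegral_indicator hpre, ← lintegral_indicator hA]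
  have hshift : ∫⁻ x, ((fun x => x - c) ⁻¹' A).indicator (exponentialPDF lam) x
      = ∫⁻ x, ((fun x => x - c) ⁻¹' A).indicator (exponentialPDF lam) (x + c) :=
    (lintegral_add_right_eq_self (((fun x => x - c) ⁻¹' A).indicator (exponentialPDF lam)) c).symm
  have hpdf : Measurable (exponentialPDF lam) :=
    (measurable_exponentialPDFReal lam).ennreal_ofReal
  rw [hshift, ← lintegral_const_mul _ (hpdf.indicator hA)]
  congr 1
  ext y
  by_cases hy : y ∈ A
  · have hy0 : 0 ≤ y := hA0 hy
    have hmem : y + c ∈ (fun x => x - c) ⁻¹' A := by simpa using hy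
    rw [Set.indicator_of_mem hmem, Set.indicator_of_mem hy]
    rw [exponentialPDF_of_nonneg (by linarith), exponentialPDF_of_nonneg hy0,
      ← ENNReal.ofReal_mul (exp_nonneg _)]
    congr 1
    rw [show -(lam * (y + c)) = -(lam * c) + -(lam * y) by ring, Real.exp_add]
    ring
  · have hmem : y + c ∉ (fun x => x - c) ⁻¹' A := by simpa using hy
    rw [Set.indicator_of_notMem hmem, Set.indicator_of_notMem hy, mul_zero]

lemma expMeasure_Iio_zero (lam : ℝ) : expMeasure lam (Iio 0) = 0 := by
  rw [expMeasure_def, withDensity_apply _ measurableSet_Iio]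
  exact lintegral_exponentialPDF_of_nonpos le_rfl

/-- Decomposition of the measure of a set over the dyadic blocks `[q·2^L, (q+1)·2^L)`. -/
lemma expMeasure_decomp (lam : ℝ) {Z : Set ℝ} (hZ : MeasurableSet Z) (L : ℤ) :
    expMeasure lam Z
      = ∑' q : ℕ, expMeasure lam (Z ∩ Ico ((q:ℝ) * 2^L) (((q:ℝ)+1) * 2^L)) := by
  have hT : (0:ℝ) < 2^L := zpow_pos (by norm_num) L
  have hcover : Ici (0:ℝ) = ⋃ q : ℕ, Ico ((q:ℝ) * 2^L) (((q:ℝ)+1) * 2^L) := by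
    ext x
    simp only [mem_Ici, mem_iUnion, mem_Ico]
    constructor
    · intro hx
      have h0 : (0:ℤ) ≤ ⌊x / 2^L⌋ := Int.floor_nonneg.2 (by positivity)
      have h1 : ((⌊x / 2^L⌋.toNat : ℕ) : ℝ) = ((⌊x / 2^L⌋ : ℤ) : ℝ) := by
        exact_mod_cast congrArg (Int.cast : ℤ → ℝ) (Int.toNat_of_nonneg h0)
      refine ⟨⌊x / 2^L⌋.toNat, ?_, ?_⟩
      · rw [h1, ← le_div_iff₀ hT]
        exact Int.floor_le _
      · rw [h1, ← div_lt_iff₀ hT]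
        exact Int.lt_floor_add_one _
    · rintro ⟨q, hq1, _⟩
      have hq0 : (0:ℝ) ≤ (q:ℝ) * 2^L := by positivity
      linarith
  have hdisj : Pairwise (Function.onFun Disjoint
      fun q : ℕ => Z ∩ Ico ((q:ℝ) * 2^L) (((q:ℝ)+1) * 2^L)) := by
    intro q q' hqq
    refine Disjoint.mono inter_subset_right inter_subset_right ?_
    rw [Set.Ico_disjoint_Ico]
    rcases lt_or_gt_of_ne hqq with h | h
    · have : ((q:ℝ)+1) ≤ (q':ℝ) := by exact_mod_cast h
      calc min (((q:ℝ)+1) * 2^L) (((q':ℝ)+1) * 2^L) ≤ ((q:ℝ)+1) * 2^L :=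
            min_le_left _ _
        _ ≤ (q':ℝ) * 2^L := by nlinarith
        _ ≤ max ((q:ℝ) * 2^L) ((q':ℝ) * 2^L) := le_max_right _ _
    · have : ((q':ℝ)+1) ≤ (q:ℝ) := by exact_mod_cast h
      calc min (((q:ℝ)+1) * 2^L) (((q':ℝ)+1) * 2^L) ≤ ((q':ℝ)+1) * 2^L :=
            min_le_right _ _
        _ ≤ (q:ℝ) * 2^L := by nlinarith
        _ ≤ max ((q:ℝ) * 2^L) ((q':ℝ) * 2^L) := le_max_left _ _
  have hmeas : ∀ q : ℕ, MeasurableSet (Z ∩ Ico ((q:ℝ) * 2^L) (((q:ℝ)+1) * 2^L)) :=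
    fun q => hZ.inter measurableSet_Ico
  have hsplit : expMeasure lam Z = expMeasure lam (Z ∩ Ici 0) := by
    have h1 : expMeasure lam (Z ∩ Iio 0) = 0 :=
      measure_mono_null inter_subset_right (expMeasure_Iio_zero lam)
    have h2 : Z = (Z ∩ Ici 0) ∪ (Z ∩ Iio 0) := by
      have hu : Ici (0:ℝ) ∪ Iio 0 = univ := by
        ext y; simp [le_or_gt]
      rw [← Set.inter_union_distrib_left, hu, inter_univ]
    refine le_antisymm ?_ (measure_mono inter_subset_left)
    calc expMeasure lam Z = expMeasure lam ((Z ∩ Ici 0) ∪ (Z ∩ Iio 0)) := by rw [← h2]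
      _ ≤ expMeasure lam (Z ∩ Ici 0) + expMeasure lam (Z ∩ Iio 0) := measure_union_le _ _
      _ = expMeasure lam (Z ∩ Ici 0) := by rw [h1, add_zero]
  rw [hsplit, hcover, Set.inter_iUnion, measure_iUnion hdisj hmeas]

/-- On the block `[q·2^L, (q+1)·2^L)` the `L`-th digit is `q % 2`. -/
lemma D_on_block {L : ℤ} {q : ℕ} {x : ℝ}
    (hx : (q:ℝ) * 2^L ≤ x) (hx' : x < ((q:ℝ)+1) * 2^L) : D L x = (q:ℤ) % 2 := by
  have hT : (0:ℝ) < 2^L := zpow_pos (by norm_num) L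
  have hfloor : ⌊x / 2^L⌋ = (q:ℤ) := by
    rw [Int.floor_eq_iff]
    constructor
    · push_cast
      rw [le_div_iff₀ hT]
      exact hx
    · push_cast
      rw [div_lt_iff₀ hT]
      exact hx'
  rw [D, hfloor]

/-- For `l < L`, digit `l` is invariant under subtracting `q·2^L`. -/
lemma D_sub_block {l L : ℤ} (hl : l < L) (q : ℕ) (x : ℝ) :
    D l (x - (q:ℝ) * 2^L) = D l x := by
  obtain ⟨m, hm⟩ : ∃ m : ℕ, L - l = ((m:ℤ) + 1) := ⟨(L - l - 1).toNat, by omega⟩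
  have hpow : (2:ℝ)^L = 2^l * (((2:ℤ)^(m+1) : ℤ) : ℝ) := by
    push_cast
    rw [← zpow_natCast (2:ℝ) (m+1), ← zpow_add₀ (by norm_num : (2:ℝ) ≠ 0)]
    congr 1
    push_cast
    omega
  have hT : (0:ℝ) < (2:ℝ)^l := zpow_pos (by norm_num) l
  have hdiv : x / 2^l = (x - (q:ℝ) * 2^L) / 2^l + (((q:ℤ) * 2^(m+1) : ℤ) : ℝ) := by
    rw [hpow]
    push_cast
    field_simp
    ring
  have hfl : ⌊x / 2^l⌋ = ⌊(x - (q:ℝ) * 2^L) / 2^l⌋ + (q:ℤ) * 2^(m+1) := by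
    rw [hdiv, Int.floor_add_intCast]
  rw [D, D, hfl]
  have h2 : (q:ℤ) * 2^(m+1) = 2 * ((q:ℤ) * 2^m) := by ring
  rw [h2]
  omega

/-- The key factorization lemma. -/
lemma key (lam : ℝ) (L : ℤ) (S : Finset ℤ) (hS : ∀ l ∈ S, l < L)
    (V : ℤ → Set ℤ) (W : Set ℤ) :
    expMeasure lam (E S V ∩ {x | D L x ∈ W})
      = (∑' q : ℕ, W.indicator 1 ((q:ℤ) % 2)
            * ENNReal.ofReal (Real.exp (-(lam * ((q:ℝ) * 2^L)))))
        * expMeasure lam (E S V ∩ Ico 0 (2^L)) := by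
  classical
  have hT : (0:ℝ) < 2^L := zpow_pos (by norm_num) L
  have hZ : MeasurableSet (E S V ∩ {x | D L x ∈ W}) :=
    (measurableSet_E S V).inter ((measurable_D L) ((Set.to_countable W).measurableSet))
  have hB : MeasurableSet (E S V ∩ Ico 0 (2^L)) :=
    (measurableSet_E S V).inter measurableSet_Ico
  have hB0 : E S V ∩ Ico 0 (2^L) ⊆ Ici 0 := fun x hx => hx.2.1
  rw [expMeasure_decomp lam hZ L]
  have hblock : ∀ q : ℕ,
      (E S V ∩ {x | D L x ∈ W}) ∩ Ico ((q:ℝ) * 2^L) (((q:ℝ)+1) * 2^L)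
        = if (q:ℤ) % 2 ∈ W then
            (fun x => x - (q:ℝ) * 2^L) ⁻¹' (E S V ∩ Ico 0 (2^L)) else ∅ := by
    intro q
    have hIco : ∀ x : ℝ, x ∈ Ico ((q:ℝ) * 2^L) (((q:ℝ)+1) * 2^L)
        ↔ x - (q:ℝ) * 2^L ∈ Ico (0:ℝ) (2^L) := by
      intro x
      simp only [mem_Ico]
      constructor
      · rintro ⟨h1, h2⟩; constructor <;> [linarith; nlinarith]
      · rintro ⟨h1, h2⟩; constructor <;> [linarith; nlinarith]
    split_ifs with hw
    · ext x
      simp only [mem_inter_iff, mem_setOf_eq, mem_preimage]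
      constructor
      · rintro ⟨⟨hE', _⟩, hxq⟩
        refine ⟨fun l hl => ?_, (hIco x).1 hxq⟩
        rw [D_sub_block (hS l hl)]
        exact hE' l hl
      · rintro ⟨hE', hxq⟩
        have hxq' := (hIco x).2 hxq
        refine ⟨⟨fun l hl => ?_, ?_⟩, hxq'⟩
        · rw [← D_sub_block (hS l hl) q x]
          exact hE' l hl
        · rw [D_on_block hxq'.1 hxq'.2]
          exact hw
    · ext x
      simp only [mem_inter_iff, mem_setOf_eq, mem_empty_iff_false, iff_false]
      rintro ⟨⟨_, hDW⟩, hxq⟩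
      rw [mem_Ico] at hxq
      rw [D_on_block hxq.1 hxq.2] at hDW
      exact hw hDW
  have hterm : ∀ q : ℕ,
      expMeasure lam ((E S V ∩ {x | D L x ∈ W}) ∩ Ico ((q:ℝ) * 2^L) (((q:ℝ)+1) * 2^L))
        = (W.indicator 1 ((q:ℤ) % 2)
            * ENNReal.ofReal (Real.exp (-(lam * ((q:ℝ) * 2^L)))))
          * expMeasure lam (E S V ∩ Ico 0 (2^L)) := by
    intro q
    rw [hblock q]
    split_ifs with hw
    · rw [expMeasure_shift lam hB hB0 (by positivity)]
      rw [Set.indicator_of_mem hw]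
      simp [mul_assoc]
    · rw [Set.indicator_of_notMem hw]
      simp
  simp_rw [hterm]
  rw [ENNReal.tsum_mul_right]

lemma E_empty (V : ℤ → Set ℤ) : E ∅ V = univ := by
  ext x; simp [E]

lemma E_singleton (L : ℤ) (V : ℤ → Set ℤ) : E {L} V = {x | D L x ∈ V L} := by
  ext x; simp [E]

/-- Main factorization: the digit events factor over finite sets of indices. -/
lemma main (lam : ℝ) (hlam : 0 < lam) (S : Finset ℤ) (V : ℤ → Set ℤ) :
    expMeasure lam (E S V) = ∏ l ∈ S, expMeasure lam (E {l} V) := by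
  classical
  haveI : IsProbabilityMeasure (expMeasure lam) := isProbabilityMeasure_expMeasure hlam
  induction S using Finset.strongInduction with
  | _ S ih =>
    rcases S.eq_empty_or_nonempty with rfl | hne
    · simp [E_empty]
    · set L := S.max' hne with hL
      have hLmem : L ∈ S := S.max'_mem hne
      set S' := S.erase L with hS'
      have hssub : S' ⊂ S := Finset.erase_ssubset hLmem
      have hlt : ∀ l ∈ S', l < L := by
        intro l hl
        have h1 := Finset.mem_erase.1 hl
        exact lt_of_le_of_ne (S.le_max' l h1.2) h1.1
      have hE : E S V = E S' V ∩ {x | D L x ∈ V L} := by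
        ext x
        simp only [E, mem_setOf_eq, mem_inter_iff]
        constructor
        · intro h
          exact ⟨fun l hl => h l (Finset.mem_of_mem_erase hl), h L hLmem⟩
        · rintro ⟨h1, h2⟩ l hl
          rcases eq_or_ne l L with rfl | hne'
          · exact h2
          · exact h1 l (Finset.mem_erase.2 ⟨hne', hl⟩)
      have k1 := key lam L S' hlt V (V L)
      have k2 := key lam L S' hlt V univ
      have k3 := key lam L ∅ (by simp) V (V L)
      have k4 := key lam L ∅ (by simp) V univ
      have huniv : {x : ℝ | D L x ∈ (univ : Set ℤ)} = univ := by ext x; simp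
      rw [huniv, inter_univ] at k2
      rw [E_empty, huniv, univ_inter, univ_inter, measure_univ] at k4
      rw [E_empty, univ_inter, univ_inter] at k3
      have hprod : ∏ l ∈ S, expMeasure lam (E {l} V)
          = expMeasure lam (E {L} V) * ∏ l ∈ S', expMeasure lam (E {l} V) :=
        (Finset.mul_prod_erase S _ hLmem).symm
      rw [hprod, ← ih S' hssub, hE, k1, E_singleton, k3, k2]
      have harr : ∀ a b c d : ℝ≥0∞, a * b * (c * d) = a * d * (c * b) := by
        intro a b c d; ring
      rw [harr, ← k4, mul_one]

end BinDigExp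

/-- If `X` is exponentially distributed with rate `λ`, then the family of its binary digits
`b_l(X) = ⌊X / 2^l⌋ % 2`, indexed by `l : ℤ`, is mutually independent. -/
theorem binary_digits_of_exponential_indep
    {Ω : Type*} [MeasurableSpace Ω] (P : Measure Ω) [IsProbabilityMeasure P]
    (lam : ℝ) (hlam : 0 < lam) (X : Ω → ℝ) (hX : Measurable X)
    (hlaw : P.map X = expMeasure lam) :
    iIndepFun
      (fun (l : ℤ) (ω : Ω) => ⌊X ω / (2 : ℝ) ^ l⌋ % 2) P := by
  classical
  rw [iIndepFun_iff_measure_inter_preimage_eq_mul]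
  intro S sets _
  have hPX : ∀ B : Set ℝ, MeasurableSet B → P (X ⁻¹' B) = expMeasure lam B := by
    intro B hB
    rw [← hlaw, Measure.map_apply hX hB]
  have h1 : (⋂ l ∈ S, (fun ω => ⌊X ω / (2:ℝ)^l⌋ % 2) ⁻¹' sets l)
      = X ⁻¹' (BinDigExp.E S sets) := by
    ext ω
    simp [BinDigExp.E, BinDigExp.D]
  have h2 : ∀ l : ℤ, ((fun ω => ⌊X ω / (2:ℝ)^l⌋ % 2) ⁻¹' sets l)
      = X ⁻¹' (BinDigExp.E {l} sets) := by
    intro l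
    ext ω
    simp [BinDigExp.E, BinDigExp.D]
  rw [h1, hPX _ (BinDigExp.measurableSet_E S sets), BinDigExp.main lam hlam S sets]
  refine Finset.prod_congr rfl fun l _ => ?_
  rw [h2 l, hPX _ (BinDigExp.measurableSet_E {l} sets)]
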